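/- Let w be a cyclic word and τ a Whitehead automorphism with multiplier a such that |τ(w)| ≤ |w|. Then every letter appearing in τ(w) (up to inversion) already appears in w, i.e. L(τ(w)) ⊆ L(w). -/

import Mathlib

open FreeGroup

/-- The length of a cyclic word (conjugacy class): the minimal word length of a representative. -/
noncomputable def cycLen {X : Type} [DecidableEq X] (c : ConjClasses (FreeGroup X)) : ℕ :=
  sInf {n | ∃ g : FreeGroup X, ConjClasses.mk g = c ∧ (FreeGroup.toWord g).length = n}

/-- An element of a free group is cyclically reduced if its first letter is not
the inverse of its last letter. -/
def IsCycRed {X : Type} [DecidableEq X] (g : FreeGroup X) : Prop :=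
  ∀ x : X × Bool, (FreeGroup.toWord g).head? = some x →
    (FreeGroup.toWord g).getLast? ≠ some (x.1, !x.2)

/-- The set `L(c)` of letters of `X` occurring (up to inversion) in the cyclic word `c`. -/
def usedLetters {X : Type} [DecidableEq X] (c : ConjClasses (FreeGroup X)) : Set X :=
  {x | ∃ g : FreeGroup X, ConjClasses.mk g = c ∧ IsCycRed g ∧ ∃ b : Bool, (x, b) ∈ FreeGroup.toWord g}

/-- The action of an automorphism of the free group on cyclic words (conjugacy classes). -/
def actC {X : Type} (φ : FreeGroup X ≃* FreeGroup X) (c : ConjClasses (FreeGroup X)) :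
    ConjClasses (FreeGroup X) :=
  ConjClasses.map (φ : FreeGroup X →* FreeGroup X) c

/-- `τ` is a Whitehead automorphism of the second kind with multiplier `a ∈ X ∪ X⁻¹`. -/
def IsWhiteheadMult {X : Type} (a : X × Bool) (τ : FreeGroup X ≃* FreeGroup X) : Prop :=
  ∀ x : X, τ (of x) ∈ ({of x, of x * FreeGroup.mk [a],
      (FreeGroup.mk [a])⁻¹ * of x, (FreeGroup.mk [a])⁻¹ * of x * FreeGroup.mk [a]} :
      Set (FreeGroup X))

/-- `τ` is a relabeling automorphism: it permutes the set `X ∪ X⁻¹`. -/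
def IsRelabeling {X : Type} (τ : FreeGroup X ≃* FreeGroup X) : Prop :=
  ∀ x : X, ∃ y : X × Bool, τ (of x) = FreeGroup.mk [y]

/-- Whitehead automorphisms. -/
def IsWhitehead {X : Type} (τ : FreeGroup X ≃* FreeGroup X) : Prop :=
  IsRelabeling τ ∨ ∃ a : X × Bool, IsWhiteheadMult a τ

/-! ### Auxiliary development -/

namespace WhiteheadAux

open List

set_option linter.unusedSectionVars false

variable {X : Type} [DecidableEq X]

/-- adjacency relation for reduced words -/
abbrev Rl : X × Bool → X × Bool → Prop := fun p q => q ≠ (p.1, !p.2)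

lemma exists_decomp_of_not_chain' : ∀ {L : List (X × Bool)}, ¬ List.Chain' Rl L →
    ∃ L₁ L₂ x b, L = L₁ ++ (x, b) :: (x, !b) :: L₂ := by
  intro L
  induction L with
  | nil => intro h; exact absurd List.isChain_nil h
  | cons p L ih =>
    intro h
    cases L with
    | nil => exact absurd (List.isChain_singleton p) h
    | cons q L' =>
      simp only [List.Chain', List.isChain_cons_cons] at h
      rcases not_and_or.mp h with h1 | h2
      · refine ⟨[], L', p.1, p.2, ?_⟩
        have : q = (p.1, !p.2) := not_not.mp h1
        simp [this]
      · obtain ⟨L₁, L₂, x, b, hE⟩ := ih h2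
        exact ⟨p :: L₁, L₂, x, b, by simp [hE]⟩

lemma chain'_toWord (g : FreeGroup X) : List.Chain' Rl (toWord g) := by
  by_contra h
  obtain ⟨L₁, L₂, x, b, hE⟩ := exists_decomp_of_not_chain' h
  rw [← FreeGroup.reduce_toWord g] at hE
  exact FreeGroup.reduce.not hE

lemma reduce_eq_self {L : List (X × Bool)} (h : List.Chain' Rl L) : FreeGroup.reduce L = L := by
  rcases Relation.ReflTransGen.cases_head (FreeGroup.reduce.red (L := L)) with h1 | ⟨M, hstep, _⟩
  · exact h1.symm
  · exfalso
    cases hstep with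
    | @not L₁ L₂ x b =>
      have : List.Chain' Rl [(x, b), (x, !b)] :=
        h.infix ⟨L₁, L₂, by simp⟩
      exact (List.isChain_pair.mp this) rfl

/-- count of letters (X-part) satisfying f -/
def cnt (f : X → Bool) (u : FreeGroup X) : ℕ := (toWord u).countP (fun p => f p.1)

lemma cnt_one (f : X → Bool) : cnt f (1 : FreeGroup X) = 0 := by
  simp [cnt, FreeGroup.toWord_one]

lemma cnt_inv (f : X → Bool) (u : FreeGroup X) : cnt f u⁻¹ = cnt f u := by
  simp [cnt, FreeGroup.toWord_inv, FreeGroup.invRev, List.countP_reverse, List.countP_map]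
  rfl

lemma cnt_mk_le (f : X → Bool) (L : List (X × Bool)) :
    cnt f (FreeGroup.mk L) ≤ L.countP (fun p => f p.1) := by
  have : toWord (FreeGroup.mk L) <+ L := by
    rw [FreeGroup.toWord_mk]; exact (FreeGroup.reduce.red).sublist
  exact this.countP_le

lemma cnt_mul_le (f : X → Bool) (u v : FreeGroup X) : cnt f (u * v) ≤ cnt f u + cnt f v := by
  have h := (FreeGroup.toWord_mul_sublist u v).countP_le (p := fun p => f p.1)
  rwa [List.countP_append] at h

lemma cnt_true (u : FreeGroup X) : cnt (fun _ => true) u = (toWord u).length := by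
  simp [cnt]

lemma toWord_pow (g : FreeGroup X) (hg : IsCycRed g) (n : ℕ) :
    toWord (g ^ n) = (List.replicate n (toWord g)).flatten := by
  by_cases hnil : toWord g = []
  · have : g = 1 := FreeGroup.toWord_eq_nil_iff.mp hnil
    subst this
    simp [hnil, FreeGroup.toWord_one, List.flatten_replicate_nil]
  · set W := toWord g with hW
    obtain ⟨p, W', hcons⟩ := List.exists_cons_of_ne_nil hnil
    have hhead : W.head? = some p := by rw [hcons]; rfl
    have hlast : ∀ q ∈ W.getLast?, Rl q p := by
      intro q hq
      have := hg p hhead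
      intro hqp
      apply this
      subst hqp
      simpa using hq
    induction n with
    | zero => simp [FreeGroup.toWord_one]
    | succ n ih =>
      have hWchain : List.Chain' Rl W := chain'_toWord g
      have hFn : toWord (g ^ n) = (List.replicate n W).flatten := ih
      have hchainFn : List.Chain' Rl (W ++ (List.replicate n W).flatten) := by
        apply List.isChain_append.mpr
        refine ⟨hWchain, ?_, ?_⟩
        · rw [← hFn]; exact chain'_toWord _
        · intro q hq y hy
          cases n with
          | zero => simp at hy
          | succ m =>
            have : ((List.replicate (m+1) W).flatten).head? = some p := by
              rw [List.replicate_succ, List.flatten_cons, hcons]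
              rfl
            rw [this] at hy
            cases hy
            exact hlast q hq
      have : g ^ (n + 1) = FreeGroup.mk (W ++ (List.replicate n W).flatten) := by
        rw [pow_succ', ← FreeGroup.mul_mk, ← hFn, hW, FreeGroup.mk_toWord, FreeGroup.mk_toWord]
      rw [this, FreeGroup.toWord_mk, reduce_eq_self hchainFn, List.replicate_succ,
        List.flatten_cons]

lemma cnt_pow (f : X → Bool) (g : FreeGroup X) (hg : IsCycRed g) (n : ℕ) :
    cnt f (g ^ n) = n * cnt f g := by
  unfold cnt
  rw [toWord_pow g hg n, List.countP_flatten]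
  simp [List.map_replicate, List.sum_replicate, smul_eq_mul]

lemma cnt_pow_le (f : X → Bool) (u : FreeGroup X) (n : ℕ) : cnt f (u ^ n) ≤ n * cnt f u := by
  induction n with
  | zero => simp [pow_zero, cnt_one]
  | succ n ih =>
    calc cnt f (u ^ (n+1)) = cnt f (u ^ n * u) := by rw [pow_succ]
    _ ≤ cnt f (u ^ n) + cnt f u := cnt_mul_le ..
    _ ≤ n * cnt f u + cnt f u := by omega
    _ = (n+1) * cnt f u := by ring

/-- key: a cyclically reduced conjugate has at most as many letters of each kind -/
lemma cnt_conj_le (f : X → Bool) {g u c : FreeGroup X} (hg : IsCycRed g)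
    (hc : g = c * u * c⁻¹) : cnt f g ≤ cnt f u := by
  by_contra hlt
  push_neg at hlt
  set K := cnt f c
  have key : ∀ n : ℕ, n * cnt f g ≤ K + n * cnt f u + K := by
    intro n
    have h1 : g ^ n = c * u ^ n * c⁻¹ := by rw [hc, conj_pow]
    calc n * cnt f g = cnt f (g ^ n) := (cnt_pow f g hg n).symm
    _ = cnt f (c * u ^ n * c⁻¹) := by rw [h1]
    _ ≤ cnt f (c * u ^ n) + cnt f c⁻¹ := cnt_mul_le ..
    _ ≤ cnt f c + cnt f (u ^ n) + cnt f c⁻¹ := by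
        have := cnt_mul_le f c (u ^ n); omega
    _ ≤ K + n * cnt f u + K := by
        have := cnt_pow_le f u n; rw [cnt_inv]; omega
  have h2 := key (2 * K + 1)
  have : cnt f u + 1 ≤ cnt f g := hlt
  nlinarith [key (2*K+1)]

lemma len_le_of_conj {g u : FreeGroup X} (hg : IsCycRed g)
    (h : ConjClasses.mk u = ConjClasses.mk g) : (toWord g).length ≤ (toWord u).length := by
  obtain ⟨c, hc⟩ := isConj_iff.mp (ConjClasses.mk_eq_mk_iff_isConj.mp h)
  rw [← cnt_true g, ← cnt_true u]
  exact cnt_conj_le _ hg hc.symm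

lemma cycLen_eq (g : FreeGroup X) (hg : IsCycRed g) :
    cycLen (ConjClasses.mk g) = (toWord g).length := by
  have hne : {n | ∃ u : FreeGroup X, ConjClasses.mk u = ConjClasses.mk g ∧
      (FreeGroup.toWord u).length = n}.Nonempty := ⟨_, g, rfl, rfl⟩
  apply Nat.le_antisymm
  · exact Nat.sInf_le ⟨g, rfl, rfl⟩
  · obtain ⟨u, hu, hlen⟩ := Nat.sInf_mem hne
    rw [cycLen, ← hlen]
    exact len_le_of_conj hg hu

/-- existence of a cyclically reduced conjugate -/
lemma exists_cycred_conj : ∀ (n : ℕ) (g : FreeGroup X), (toWord g).length ≤ n →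
    ∃ h, IsConj g h ∧ IsCycRed h := by
  intro n
  induction n with
  | zero =>
    intro g hlen
    refine ⟨g, IsConj.refl g, ?_⟩
    intro x hx
    have : toWord g = [] := List.eq_nil_of_length_eq_zero (Nat.le_zero.mp hlen)
    rw [this] at hx; cases hx
  | succ n ih =>
    intro g hlen
    by_cases hg : IsCycRed g
    · exact ⟨g, IsConj.refl g, hg⟩
    · unfold IsCycRed at hg
      push_neg at hg
      obtain ⟨x, hx, hlast⟩ := hg
      set L := toWord g with hL
      have hLne : L ≠ [] := by intro h; rw [h] at hx; cases hx
      obtain ⟨q, M, hcons⟩ := List.exists_cons_of_ne_nil hLne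
      have hq : q = x := by rw [hcons] at hx; simpa using hx
      subst hq
      cases hM : M with
      | nil =>
        exfalso
        rw [hcons, hM] at hlast
        simp at hlast
        have : q.2 = !q.2 := congrArg Prod.snd hlast
        exact (Bool.eq_not_self q.2).mp this
      | cons r M' =>
        have hMne : M ≠ [] := by rw [hM]; simp
        have hM0ex : ∃ M₀ z, M = M₀ ++ [z] := by
          obtain ⟨M₀, z, hcz⟩ := (List.eq_nil_or_concat M).resolve_left hMne
          exact ⟨M₀, z, by simpa using hcz⟩
        obtain ⟨M₀, z, hM0⟩ := hM0ex
        have hz : z = (q.1, !q.2) := by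
          rw [hcons, hM0] at hlast
          have : (q :: (M₀ ++ [z])).getLast? = some z := by
            rw [show q :: (M₀ ++ [z]) = (q :: M₀) ++ [z] by simp, List.getLast?_append_cons]
            rfl
          rw [this] at hlast
          simpa using hlast
        have hsplit : g = FreeGroup.mk [q] * FreeGroup.mk M₀ * (FreeGroup.mk [q])⁻¹ := by
          rw [FreeGroup.inv_mk, FreeGroup.mul_mk, FreeGroup.mul_mk]
          have : FreeGroup.invRev [q] = [(q.1, !q.2)] := by
            simp [FreeGroup.invRev]
          rw [this, ← hz]
          conv_lhs => rw [← FreeGroup.mk_toWord (x := g), ← hL, hcons, hM0]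
          simp
        have hlen' : (toWord (FreeGroup.mk M₀)).length ≤ n := by
          have h1 : (toWord (FreeGroup.mk M₀)).length ≤ M₀.length := by
            rw [FreeGroup.toWord_mk]
            exact (FreeGroup.reduce.red).sublist.length_le
          have h2 : L.length = M₀.length + 2 := by
            rw [hcons, hM0]; simp
          omega
        obtain ⟨h, hconj, hcyc⟩ := ih (FreeGroup.mk M₀) hlen'
        refine ⟨h, IsConj.trans ?_ hconj, hcyc⟩
        rw [hsplit]
        exact (isConj_iff.mpr ⟨FreeGroup.mk [q], rfl⟩).symm

lemma exists_cycred_rep (c : ConjClasses (FreeGroup X)) :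
    ∃ h : FreeGroup X, ConjClasses.mk h = c ∧ IsCycRed h := by
  obtain ⟨g, hg⟩ := ConjClasses.exists_rep c
  obtain ⟨h, hconj, hcyc⟩ := exists_cycred_conj (toWord g).length g le_rfl
  exact ⟨h, by rw [← hg]; exact (ConjClasses.mk_eq_mk_iff_isConj.mpr hconj).symm, hcyc⟩

section Whitehead

variable (a : X × Bool) (τ : FreeGroup X ≃* FreeGroup X) (hτ : IsWhiteheadMult a τ)

lemma cnt_of (f : X → Bool) (y : X) (hfy : f y = false) : cnt f (of y) = 0 := by
  simp [cnt, FreeGroup.toWord_of, hfy]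

lemma cnt_mka (f : X → Bool) (hfa : f a.1 = false) : cnt f (FreeGroup.mk [a]) = 0 := by
  have := cnt_mk_le f [a]
  simp [hfa] at this
  omega

include hτ in
lemma cnt_tau_of (f : X → Bool) (hfa : f a.1 = false) {y : X} (hfy : f y = false) :
    cnt f (τ (of y)) = 0 := by
  have h1 : cnt f (of y) = 0 := cnt_of f y hfy
  have h2 : cnt f (FreeGroup.mk [a]) = 0 := cnt_mka a f hfa
  have h3 : cnt f (FreeGroup.mk [a])⁻¹ = 0 := by rw [cnt_inv]; exact h2
  rcases hτ y with h | h | h | h <;> rw [h]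
  · exact h1
  · have := cnt_mul_le f (of y) (FreeGroup.mk [a]); omega
  · have := cnt_mul_le f (FreeGroup.mk [a])⁻¹ (of y); omega
  · have h4 := cnt_mul_le f ((FreeGroup.mk [a])⁻¹ * of y) (FreeGroup.mk [a])
    have h5 := cnt_mul_le f (FreeGroup.mk [a])⁻¹ (of y)
    omega

lemma mk_single_true (y : X) : FreeGroup.mk [(y, true)] = of y := rfl

lemma mk_single_false (y : X) : FreeGroup.mk [(y, false)] = (of y)⁻¹ := by
  show FreeGroup.mk [(y, false)] = (FreeGroup.mk [(y, true)])⁻¹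
  rw [FreeGroup.inv_mk]
  simp [FreeGroup.invRev]

include hτ in
lemma cnt_tau_word (f : X → Bool) (hfa : f a.1 = false) :
    ∀ L : List (X × Bool), (∀ p ∈ L, f p.1 = false) → cnt f (τ (FreeGroup.mk L)) = 0 := by
  intro L
  induction L with
  | nil =>
    intro _
    have : FreeGroup.mk ([] : List (X × Bool)) = 1 := rfl
    rw [this, _root_.map_one, cnt_one]
  | cons p L ih =>
    intro hL
    have hsplit : FreeGroup.mk (p :: L) = FreeGroup.mk [p] * FreeGroup.mk L := by
      rw [FreeGroup.mul_mk]; rfl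
    have hp : cnt f (τ (FreeGroup.mk [p])) = 0 := by
      obtain ⟨y, b⟩ := p
      have hfy : f y = false := hL (y, b) (by simp)
      cases b
      · rw [mk_single_false, _root_.map_inv, cnt_inv]
        exact cnt_tau_of a τ hτ f hfa hfy
      · rw [mk_single_true]
        exact cnt_tau_of a τ hτ f hfa hfy
    have hrest : cnt f (τ (FreeGroup.mk L)) = 0 := ih (fun p hp => hL p (by simp [hp]))
    rw [hsplit, _root_.map_mul]
    have := cnt_mul_le f (τ (FreeGroup.mk [p])) (τ (FreeGroup.mk L))
    omega

noncomputable def phiA : FreeGroup X →* FreeGroup X :=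
  FreeGroup.lift (fun y => if y = a.1 then 1 else of y)

lemma phiA_of (y : X) : phiA a (of y) = if y = a.1 then 1 else of y := FreeGroup.lift_apply_of

lemma phiA_mka : phiA a (FreeGroup.mk [a]) = 1 := by
  obtain ⟨a1, b⟩ := a
  cases b
  · rw [mk_single_false, _root_.map_inv, phiA_of]
    simp
  · rw [mk_single_true, phiA_of]
    simp

include hτ in
lemma phiA_tau_of {y : X} (hy : y ≠ a.1) : phiA a (τ (of y)) = of y := by
  have h1 : phiA a (of y) = of y := by rw [phiA_of]; simp [hy]
  have h2 : phiA a (FreeGroup.mk [a]) = 1 := phiA_mka a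
  have h3 : phiA a (FreeGroup.mk [a])⁻¹ = 1 := by rw [_root_.map_inv, h2, inv_one]
  rcases hτ y with h | h | h | h <;> rw [h]
  · exact h1
  · rw [_root_.map_mul, h1, h2, mul_one]
  · rw [_root_.map_mul, _root_.map_inv, h2, h1]; simp
  · rw [_root_.map_mul, _root_.map_mul, _root_.map_inv, h1, h2]; simp

include hτ in
lemma phiA_tau_word : ∀ L : List (X × Bool), (∀ p ∈ L, p.1 ≠ a.1) →
    phiA a (τ (FreeGroup.mk L)) = FreeGroup.mk L := by
  intro L
  induction L with
  | nil =>
    intro _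
    show phiA a (τ 1) = 1
    rw [_root_.map_one, _root_.map_one]
  | cons p L ih =>
    intro hL
    have hsplit : FreeGroup.mk (p :: L) = FreeGroup.mk [p] * FreeGroup.mk L := by
      rw [FreeGroup.mul_mk]; rfl
    have hy : p.1 ≠ a.1 := hL p (by simp)
    have hp : phiA a (τ (FreeGroup.mk [p])) = FreeGroup.mk [p] := by
      obtain ⟨y, b⟩ := p
      cases b
      · rw [mk_single_false, _root_.map_inv, _root_.map_inv, phiA_tau_of a τ hτ hy]
      · rw [mk_single_true, phiA_tau_of a τ hτ hy]
    rw [hsplit, _root_.map_mul, _root_.map_mul, hp, ih (fun q hq => hL q (by simp [hq]))]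

lemma phiA_len : ∀ L : List (X × Bool),
    (toWord (phiA a (FreeGroup.mk L))).length ≤ L.countP (fun p => decide (p.1 ≠ a.1)) := by
  intro L
  induction L with
  | nil =>
    show (toWord (phiA a 1)).length ≤ _
    rw [_root_.map_one, FreeGroup.toWord_one]
    simp
  | cons p L ih =>
    have hsplit : FreeGroup.mk (p :: L) = FreeGroup.mk [p] * FreeGroup.mk L := by
      rw [FreeGroup.mul_mk]; rfl
    have hmul : (toWord (phiA a (FreeGroup.mk [p]) * phiA a (FreeGroup.mk L))).length ≤
        (toWord (phiA a (FreeGroup.mk [p]))).length +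
        (toWord (phiA a (FreeGroup.mk L))).length := by
      have := (FreeGroup.toWord_mul_sublist (phiA a (FreeGroup.mk [p]))
        (phiA a (FreeGroup.mk L))).length_le
      rwa [List.length_append] at this
    have hp : (toWord (phiA a (FreeGroup.mk [p]))).length ≤ if p.1 = a.1 then 0 else 1 := by
      obtain ⟨y, b⟩ := p
      have hof : (toWord (phiA a (of y))).length ≤ if y = a.1 then 0 else 1 := by
        rw [phiA_of]
        by_cases hy : y = a.1 <;> simp [hy, FreeGroup.toWord_one, FreeGroup.toWord_of]
      cases b
      · rw [mk_single_false, _root_.map_inv, FreeGroup.toWord_inv, FreeGroup.invRev,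
          List.length_reverse, List.length_map]
        simpa using hof
      · rw [mk_single_true]
        simpa using hof
    have h2 : (if (fun p => decide (p.1 ≠ a.1)) p = true then 1 else 0) =
        (if p.1 = a.1 then 0 else 1) := by
      by_cases h : p.1 = a.1 <;> simp [h]
    rw [hsplit, _root_.map_mul, List.countP_cons, h2]
    omega

end Whitehead

end WhiteheadAux

/-- If `τ` is a Whitehead automorphism with multiplier `a` and `|τ(w)| ≤ |w|`,
then every letter of `τ(w)` (up to inversion) already appears in `w`. -/
theorem whitehead_letters_subset {X : Type} [DecidableEq X]
    (w : ConjClasses (FreeGroup X)) (a : X × Bool) (τ : FreeGroup X ≃* FreeGroup X)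
    (hτ : IsWhiteheadMult a τ) (hlen : cycLen (actC τ w) ≤ cycLen w) :
    usedLetters (actC τ w) ⊆ usedLetters w := by
  classical
  open WhiteheadAux in
  intro x hx
  obtain ⟨g, hgmk, hgcyc, b, hb⟩ := hx
  obtain ⟨h, hhmk, hhcyc⟩ := exists_cycred_rep w
  have hact : actC τ w = ConjClasses.mk (τ h) := by rw [← hhmk]; rfl
  have hmkgh : ConjClasses.mk (τ h) = ConjClasses.mk g := by rw [← hact, hgmk]
  obtain ⟨c, hc⟩ := isConj_iff.mp (ConjClasses.mk_eq_mk_iff_isConj.mp hmkgh)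
  -- hc : c * τ h * c⁻¹ = g
  by_cases hxh : ∃ b', (x, b') ∈ FreeGroup.toWord h
  · exact ⟨h, hhmk, hhcyc, hxh⟩
  exfalso
  push_neg at hxh
  by_cases hxa : x = a.1
  · -- the letter is the multiplier, and it does not occur in w
    subst hxa
    have hha : ∀ p ∈ FreeGroup.toWord h, p.1 ≠ a.1 := by
      intro p hp hpa
      exact hxh p.2 (by rw [← hpa]; simpa using hp)
    have hphi : phiA a (τ h) = h := by
      have := phiA_tau_word a τ hτ (FreeGroup.toWord h) hha
      rwa [FreeGroup.mk_toWord] at this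
    have hconj : ConjClasses.mk (phiA a g) = w := by
      rw [← hc]
      have : phiA a (c * τ h * c⁻¹) = phiA a c * h * (phiA a c)⁻¹ := by
        rw [_root_.map_mul, _root_.map_mul, _root_.map_inv, hphi]
      rw [this, ← hhmk]
      exact ConjClasses.mk_eq_mk_iff_isConj.mpr ((isConj_iff.mpr ⟨phiA a c, rfl⟩).symm)
    have h1 : cycLen w ≤ (FreeGroup.toWord (phiA a g)).length :=
      Nat.sInf_le ⟨phiA a g, hconj, rfl⟩
    have h2 : (FreeGroup.toWord (phiA a g)).length ≤
        (FreeGroup.toWord g).countP (fun p => decide (p.1 ≠ a.1)) := by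
      have := phiA_len a (FreeGroup.toWord g)
      rwa [FreeGroup.mk_toWord] at this
    have h3 := List.length_eq_countP_add_countP
      (p := fun p : X × Bool => decide (p.1 ≠ a.1)) (l := FreeGroup.toWord g)
    have h4 : 0 < (FreeGroup.toWord g).countP
        (fun p => decide ¬((fun p : X × Bool => decide (p.1 ≠ a.1)) p = true)) :=
      List.countP_pos_iff.mpr ⟨(a.1, b), hb, by simp⟩
    beta_reduce at h4
    have h5 : (FreeGroup.toWord g).length = cycLen (actC τ w) := by
      rw [← hgmk, cycLen_eq g hgcyc]
    omega
  · -- the letter is not the multiplier and does not occur in w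
    have hfa : (fun y => decide (y = x)) a.1 = false := by
      simp [Ne.symm hxa]
    have hf : ∀ p ∈ FreeGroup.toWord h, (fun y => decide (y = x)) p.1 = false := by
      intro p hp
      simp only [decide_eq_false_iff_not]
      intro hpa
      exact hxh p.2 (by rw [← hpa]; simpa using hp)
    have h0 : cnt (fun y => decide (y = x)) (τ h) = 0 := by
      have := cnt_tau_word a τ hτ (fun y => decide (y = x)) hfa (FreeGroup.toWord h) hf
      rwa [FreeGroup.mk_toWord] at this
    have hle := cnt_conj_le (fun y => decide (y = x)) hgcyc hc.symm
    have hxg : 0 < cnt (fun y => decide (y = x)) g :=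
      List.countP_pos_iff.mpr ⟨(x, b), hb, by simp⟩
    omega
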